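/- There is n0 ∈ ℕ such that the following holds for every n ≥ n0. Let H be a B-free simplicial complex on n vertices in which every edge has size at most 3 and every vertex u satisfies d(u) > (9/8)(n−1) + 5/16. Then for every vertex v of H there are no three distinct vertices w, x, y such that {w,x}, {x,y} and {w,y} are all 2-edges of the link L_v (i.e., the 2-edges of no link contain a triangle; consequently every link consists only of isolated vertices, isolated 2-edges, and isolated induced 2-uniform stars with at least two edges). -/

import Mathlib

open Finset

/-- `E` is the edge set of a simplicial complex: it is closed under taking subsets. -/
def IsComplex {α : Type*} [DecidableEq α] (E : Finset (Finset α)) : Prop :=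
  ∀ e ∈ E, ∀ f ⊆ e, f ∈ E

/-- `H` contains a copy of `F`: an injection of the vertices mapping edges to edges. -/
def HasCopy {α β : Type*} [DecidableEq β]
    (F : Finset (Finset α)) (H : Finset (Finset β)) : Prop :=
  ∃ f : α → β, Function.Injective f ∧ ∀ e ∈ F, e.image f ∈ H

/-- downward closure of a family of sets -/
def dClosure {α : Type*} [DecidableEq α] (S : Finset (Finset α)) : Finset (Finset α) :=
  S.biUnion Finset.powerset

/-- `ex(n,F)`: the extremal number for simplicial complexes -/
noncomputable def exSC {α : Type*} (n : ℕ) (F : Finset (Finset α)) : ℕ :=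
  sSup {m | ∃ E : Finset (Finset (Fin n)), IsComplex E ∧ ¬ HasCopy F E ∧ E.card = m}

/-- `ex^(k)(n,F)`: the extremal number for `k`-uniform hypergraphs -/
noncomputable def exUnif {α : Type*} (k n : ℕ) (F : Finset (Finset α)) : ℕ :=
  sSup {m | ∃ E : Finset (Finset (Fin n)),
    (∀ e ∈ E, e.card = k) ∧ ¬ HasCopy F E ∧ E.card = m}

/-- the complex `B`: downward closure of `{{v3,v4},{v1,v2,v3},{v1,v4,v5}}`
(vertices `v1,…,v5` are `0,…,4`) -/
def B : Finset (Finset (Fin 5)) :=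
  dClosure {{2, 3}, {0, 1, 2}, {0, 3, 4}}

/-- edge set of the link `L_v` -/
def linkEdges {V : Type*} [DecidableEq V] (E : Finset (Finset V)) (v : V) :
    Finset (Finset V) :=
  (E.filter (fun e => v ∈ e)).image (fun e => e.erase v)

/-- `d^(i)(u)`: number of `i`-edges containing `u` -/
def degI {V : Type*} [DecidableEq V] (E : Finset (Finset V)) (i : ℕ) (u : V) : ℕ :=
  (E.filter (fun e => u ∈ e ∧ e.card = i)).card

/-- `d(u)`: number of edges of size at least 2 containing `u` -/
def dDeg {V : Type*} [DecidableEq V] (E : Finset (Finset V)) (u : V) : ℕ :=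
  (E.filter (fun e => u ∈ e ∧ 2 ≤ e.card)).card

section
variable {n : ℕ} {E : Finset (Finset (Fin n))}

lemma bcopy (hE : IsComplex E) {a b c d e : Fin n}
    (dab : a≠b) (dac : a≠c) (dad : a≠d) (dae : a≠e) (dbc : b≠c) (dbd : b≠d)
    (dbe : b≠e) (dcd : c≠d) (dce : c≠e) (dde : d≠e)
    (h1 : ({a,b,c} : Finset (Fin n)) ∈ E) (h2 : ({a,d,e} : Finset (Fin n)) ∈ E)
    (h3 : ({c,d} : Finset (Fin n)) ∈ E) :
    HasCopy B E := by
  refine ⟨![a,b,c,d,e], ?_, ?_⟩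
  · intro i j hij
    fin_cases i <;> fin_cases j <;> simp_all
  · intro s hs
    have hmem : s ⊆ ({2,3} : Finset (Fin 5)) ∨ s ⊆ {0,1,2} ∨ s ⊆ {0,3,4} := by
      have : ∀ t ∈ B, t ⊆ ({2,3} : Finset (Fin 5)) ∨ t ⊆ {0,1,2} ∨ t ⊆ {0,3,4} := by decide
      exact this s hs
    have i23 : Finset.image ![a,b,c,d,e] ({2,3} : Finset (Fin 5)) = {c,d} := by
      simp [Finset.image_insert]
    have i012 : Finset.image ![a,b,c,d,e] ({0,1,2} : Finset (Fin 5)) = {a,b,c} := by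
      simp [Finset.image_insert]
    have i034 : Finset.image ![a,b,c,d,e] ({0,3,4} : Finset (Fin 5)) = {a,d,e} := by
      simp [Finset.image_insert]
    rcases hmem with h|h|h
    · exact hE _ h3 _ (i23 ▸ Finset.image_subset_image h)
    · exact hE _ h1 _ (i012 ▸ Finset.image_subset_image h)
    · exact hE _ h2 _ (i034 ▸ Finset.image_subset_image h)

end
section
variable {n : ℕ} {E : Finset (Finset (Fin n))}

/-- auxiliary: the set `M_u` of outside vertices joined to `u` but to no other vertex of `Q` -/
def Mset (E : Finset (Finset (Fin n))) (Q : Finset (Fin n)) (u : Fin n) : Finset (Fin n) :=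
  Finset.univ.filter (fun z => z ∉ Q ∧ ({u, z} : Finset (Fin n)) ∈ E ∧
    ∀ p ∈ Q, p ≠ u → ({p, z} : Finset (Fin n)) ∉ E)

lemma mem_Mset {Q : Finset (Fin n)} {u z : Fin n} :
    z ∈ Mset E Q u ↔ z ∉ Q ∧ ({u, z} : Finset (Fin n)) ∈ E ∧
      ∀ p ∈ Q, p ≠ u → ({p, z} : Finset (Fin n)) ∉ E := by
  simp [Mset]

lemma card3' {a b c : Fin n} (hab : a ≠ b) (hac : a ≠ c) (hbc : b ≠ c) :
    ({a, b, c} : Finset (Fin n)).card = 3 := by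
  rw [Finset.card_insert_of_notMem (by simp [hab, hac]),
    Finset.card_insert_of_notMem (by simp [hbc]), Finset.card_singleton]

lemma keycount (hE : IsComplex E) (h3 : ∀ e ∈ E, e.card ≤ 3)
    {Q : Finset (Fin n)} {u : Fin n} (hu : u ∈ Q) (hQ4 : Q.card = 4)
    (stepA : ∀ q ∈ Q, q ≠ u → ∀ z ∉ Q, (insert u ({q, z} : Finset (Fin n))) ∉ E)
    (stepB : ∀ z1 z2 : Fin n, z1 ∉ Q → z2 ∉ Q → z1 ≠ z2 →
      (insert u ({z1, z2} : Finset (Fin n))) ∈ E → ∀ p ∈ Q, p ≠ u →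
      ({p, z1} : Finset (Fin n)) ∉ E)
    (stepC : ∀ z1 t1 z2 t2 : Fin n, z1 ≠ u → t1 ≠ u → z2 ≠ u → t2 ≠ u →
      z1 ≠ t1 → z1 ≠ z2 → z1 ≠ t2 → t1 ≠ z2 → t1 ≠ t2 → z2 ≠ t2 →
      (insert u ({z1, t1} : Finset (Fin n))) ∈ E →
      (insert u ({z2, t2} : Finset (Fin n))) ∈ E →
      ({z1, z2} : Finset (Fin n)) ∈ E → False) :
    dDeg E u + 1 + ∑ q ∈ Q.erase u, (Mset E Q q).card ≤ n + 16 + 2 * (Mset E Q u).card := by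
  classical
  set S : Finset (Finset (Fin n)) :=
    E.filter (fun e => u ∈ e ∧ e.card = 3 ∧ ¬ e ⊆ Q) with hS
  -- each 3-edge not inside Q has both other endpoints outside Q and in `Mset E Q u`
  have claim1 : ∀ e ∈ S, ∀ z ∈ e.erase u, z ∈ Mset E Q u := by
    intro e he z hz
    rw [hS, Finset.mem_filter] at he
    obtain ⟨heE, hue, hc3, hnsub⟩ := he
    rw [Finset.mem_erase] at hz
    obtain ⟨hzu, hze⟩ := hz
    -- first: every element of `e.erase u` is outside Q
    have hout : ∀ z' ∈ e, z' ≠ u → z' ∉ Q := by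
      intro z' hz'e hz'u hz'Q
      obtain ⟨z'', hz''e, hz''Q⟩ := Finset.not_subset.mp hnsub
      have hz'' : z'' ≠ u := fun h => hz''Q (h ▸ hu)
      have hzz : z'' ≠ z' := fun h => hz''Q (h ▸ hz'Q)
      have hsub : (insert u ({z', z''} : Finset (Fin n))) ⊆ e := by
        intro t ht
        simp only [Finset.mem_insert, Finset.mem_singleton] at ht
        rcases ht with rfl | rfl | rfl <;> assumption
      have hcard : (insert u ({z', z''} : Finset (Fin n))).card = 3 :=
        card3' (Ne.symm hz'u) (Ne.symm hz'') hzz.symm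
      have : e = insert u ({z', z''} : Finset (Fin n)) :=
        (Finset.eq_of_subset_of_card_le hsub (by omega)).symm
      exact stepA z' hz'Q hz'u z'' hz''Q (this ▸ heE)
    have hzQ : z ∉ Q := hout z hze hzu
    -- the other element z'
    have hc2 : (e.erase u).card = 2 := by
      rw [Finset.card_erase_of_mem hue, hc3]
    have : ((e.erase u).erase z).card = 1 := by
      rw [Finset.card_erase_of_mem (by simp [hze, hzu]), hc2]
    obtain ⟨z', hz'⟩ := Finset.card_eq_one.mp this
    have hz'mem : z' ∈ (e.erase u).erase z := hz' ▸ Finset.mem_singleton_self z'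
    rw [Finset.mem_erase, Finset.mem_erase] at hz'mem
    obtain ⟨hz'z, hz'u, hz'e⟩ := hz'mem
    have hz'Q : z' ∉ Q := hout z' hz'e hz'u
    have hsub : (insert u ({z, z'} : Finset (Fin n))) ⊆ e := by
      intro t ht
      simp only [Finset.mem_insert, Finset.mem_singleton] at ht
      rcases ht with rfl | rfl | rfl <;> assumption
    have hcard : (insert u ({z, z'} : Finset (Fin n))).card = 3 :=
      card3' (Ne.symm hzu) (Ne.symm hz'u) (Ne.symm hz'z)
    have heq : e = insert u ({z, z'} : Finset (Fin n)) :=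
      (Finset.eq_of_subset_of_card_le hsub (by omega)).symm
    rw [mem_Mset]
    refine ⟨hzQ, hE e heE _ ?_, stepB z z' hzQ hz'Q (Ne.symm hz'z) (heq ▸ heE)⟩
    intro t ht
    simp only [Finset.mem_insert, Finset.mem_singleton] at ht
    rcases ht with rfl | rfl <;> assumption
  -- low degree endpoint exists
  have claim2 : ∀ e ∈ S, ∃ z ∈ e.erase u, (S.filter (fun e' => z ∈ e')).card ≤ 2 := by
    intro e he
    by_contra hcon
    push_neg at hcon
    have hdeg : ∀ z ∈ e.erase u, 3 ≤ (S.filter (fun e' => z ∈ e')).card := by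
      intro z hz
      exact hcon z hz
    rw [hS, Finset.mem_filter] at he
    obtain ⟨heE, hue, hc3, hnsub⟩ := he
    have hc2 : (e.erase u).card = 2 := by
      rw [Finset.card_erase_of_mem hue, hc3]
    obtain ⟨z1, z2, hz12, hz⟩ := Finset.card_eq_two.mp hc2
    have hz1 : z1 ∈ e.erase u := by rw [hz]; simp
    have hz2 : z2 ∈ e.erase u := by rw [hz]; simp
    have hz1u : z1 ≠ u := (Finset.mem_erase.mp hz1).1
    have hz2u : z2 ≠ u := (Finset.mem_erase.mp hz2).1
    have hz1e : z1 ∈ e := (Finset.mem_erase.mp hz1).2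
    have hz2e : z2 ∈ e := (Finset.mem_erase.mp hz2).2
    have heq : e = insert u ({z1, z2} : Finset (Fin n)) := by
      rw [← hz, Finset.insert_erase hue]
    -- a member of S is determined by being inside a 3-set
    have hdet : ∀ (A : Finset (Fin n)), A.card = 3 → ∀ e' ∈ S, e' ⊆ A → e' = A := by
      intro A hA e' he' hsub
      rw [hS, Finset.mem_filter] at he'
      exact Finset.eq_of_subset_of_card_le hsub (by omega)
    -- find a third edge through z1
    have h1 : ∃ e' ∈ S, z1 ∈ e' ∧ ¬ e' ⊆ insert u ({z1, z2} : Finset (Fin n)) := by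
      by_contra hcon2
      push_neg at hcon2
      have : S.filter (fun e' => z1 ∈ e') ⊆ {insert u ({z1, z2} : Finset (Fin n))} := by
        intro e' he'
        rw [Finset.mem_filter] at he'
        rw [Finset.mem_singleton]
        exact hdet _ (card3' (Ne.symm hz1u) (Ne.symm hz2u) hz12) e' he'.1
          (hcon2 e' he'.1 he'.2)
      have := (Finset.card_le_card this).trans (Finset.card_singleton _).le
      have := hdeg z1 hz1
      omega
    obtain ⟨e', he'S, hz1e', hnsub'⟩ := h1
    obtain ⟨t1, ht1e', ht1⟩ := Finset.not_subset.mp hnsub'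
    simp only [Finset.mem_insert, Finset.mem_singleton, not_or] at ht1
    obtain ⟨ht1u, ht1z1, ht1z2⟩ := ht1
    have he'eq : e' = insert u ({z1, t1} : Finset (Fin n)) := by
      have hmm := Finset.mem_filter.mp he'S
      refine (Finset.eq_of_subset_of_card_le ?_ ?_).symm
      · intro t ht
        simp only [Finset.mem_insert, Finset.mem_singleton] at ht
        rcases ht with rfl | rfl | rfl
        · exact hmm.2.1
        · exact hz1e'
        · exact ht1e'
      · rw [hmm.2.2.1, card3' (Ne.symm hz1u) (Ne.symm ht1u) (Ne.symm ht1z1)]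
    -- find a third edge through z2 avoiding u,z1,z2,t1
    have h2 : ∃ e'' ∈ S, z2 ∈ e'' ∧ ¬ e'' ⊆ insert t1 (insert u ({z1, z2} : Finset (Fin n))) := by
      by_contra hcon2
      push_neg at hcon2
      have hsub2 : S.filter (fun e' => z2 ∈ e') ⊆
          {insert u ({z2, z1} : Finset (Fin n)), insert u ({z2, t1} : Finset (Fin n))} := by
        intro f hf
        rw [Finset.mem_filter] at hf
        obtain ⟨hfS, hz2f⟩ := hf
        have hfsub := hcon2 f hfS hz2f
        have hfm := Finset.mem_filter.mp hfS
        have huf : u ∈ f := hfm.2.1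
        have hfc : f.card = 3 := hfm.2.2.1
        have : ((f.erase u).erase z2).card = 1 := by
          rw [Finset.card_erase_of_mem (by simp [hz2f, hz2u]),
            Finset.card_erase_of_mem huf, hfc]
        obtain ⟨t, ht⟩ := Finset.card_eq_one.mp this
        have htmem : t ∈ (f.erase u).erase z2 := ht ▸ Finset.mem_singleton_self t
        rw [Finset.mem_erase, Finset.mem_erase] at htmem
        obtain ⟨htz2, htu, htf⟩ := htmem
        have hfeq : f = insert u ({z2, t} : Finset (Fin n)) := by
          refine (Finset.eq_of_subset_of_card_le ?_ ?_).symm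
          · intro s hs
            simp only [Finset.mem_insert, Finset.mem_singleton] at hs
            rcases hs with rfl | rfl | rfl <;> assumption
          · rw [hfc, card3' (Ne.symm hz2u) (Ne.symm htu) (Ne.symm htz2)]
        have htin := hfsub htf
        simp only [Finset.mem_insert, Finset.mem_singleton] at htin
        rcases htin with rfl | rfl | rfl | rfl
        · rw [Finset.mem_insert, Finset.mem_singleton]
          right; rw [hfeq]
        · exact absurd rfl htu
        · rw [Finset.mem_insert, Finset.mem_singleton]
          left; rw [hfeq]
        · exact absurd rfl htz2
      have hle : (S.filter (fun e' => z2 ∈ e')).card ≤ 2 :=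
        (Finset.card_le_card hsub2).trans
          (le_trans (Finset.card_insert_le _ _) (by simp))
      have := hdeg z2 hz2
      omega
    obtain ⟨e'', he''S, hz2e'', hnsub''⟩ := h2
    obtain ⟨t2, ht2e'', ht2⟩ := Finset.not_subset.mp hnsub''
    simp only [Finset.mem_insert, Finset.mem_singleton, not_or] at ht2
    obtain ⟨ht2t1, ht2u, ht2z1, ht2z2⟩ := ht2
    have he''eq : e'' = insert u ({z2, t2} : Finset (Fin n)) := by
      have hmm := Finset.mem_filter.mp he''S
      refine (Finset.eq_of_subset_of_card_le ?_ ?_).symm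
      · intro t ht
        simp only [Finset.mem_insert, Finset.mem_singleton] at ht
        rcases ht with rfl | rfl | rfl
        · exact hmm.2.1
        · exact hz2e''
        · exact ht2e''
      · rw [hmm.2.2.1, card3' (Ne.symm hz2u) (Ne.symm ht2u) (Ne.symm ht2z2)]
    have hz1z2E : ({z1, z2} : Finset (Fin n)) ∈ E := by
      refine hE e heE _ ?_
      intro t ht
      simp only [Finset.mem_insert, Finset.mem_singleton] at ht
      rcases ht with rfl | rfl <;> assumption
    exact stepC z1 t1 z2 t2 hz1u ht1u hz2u ht2u (Ne.symm ht1z1) hz12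
      (Ne.symm ht2z1) ht1z2 (Ne.symm ht2t1)
      (Ne.symm ht2z2)
      (he'eq ▸ (Finset.mem_filter.mp he'S).1)
      (he''eq ▸ (Finset.mem_filter.mp he''S).1) hz1z2E
  -- (3c): bound S.card
  set L := (Mset E Q u).filter (fun z => (S.filter (fun e' => z ∈ e')).card ≤ 2) with hL
  have hScard : S.card ≤ 2 * (Mset E Q u).card := by
    have h1 : ∀ e ∈ S, 1 ≤ (L.filter (fun z => z ∈ e)).card := by
      intro e he
      obtain ⟨z, hz, hzdeg⟩ := claim2 e he
      have hzM := claim1 e he z hz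
      have hmem : z ∈ L.filter (fun z => z ∈ e) := by
        rw [Finset.mem_filter, hL, Finset.mem_filter]
        exact ⟨⟨hzM, hzdeg⟩, (Finset.mem_erase.mp hz).2⟩
      exact Finset.card_pos.mpr ⟨z, hmem⟩
    calc S.card = ∑ _e ∈ S, 1 := by simp
      _ ≤ ∑ e ∈ S, (L.filter (fun z => z ∈ e)).card := Finset.sum_le_sum h1
      _ = ∑ z ∈ L, (S.filter (fun e => z ∈ e)).card := by
          simp only [Finset.card_filter]
          exact Finset.sum_comm
      _ ≤ ∑ _z ∈ L, 2 := Finset.sum_le_sum (fun z hz => (Finset.mem_filter.mp hz).2)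
      _ = 2 * L.card := by rw [Finset.sum_const, smul_eq_mul, mul_comm]
      _ ≤ 2 * (Mset E Q u).card := by
          have hh := Finset.card_le_card (Finset.filter_subset
            (fun z => (S.filter (fun e' => z ∈ e')).card ≤ 2) (Mset E Q u))
          rw [← hL] at hh
          omega
  -- 3-edges inside Q
  have hd3a : (E.filter (fun e => u ∈ e ∧ e.card = 3 ∧ e ⊆ Q)).card ≤ 16 := by
    have hsub : E.filter (fun e => u ∈ e ∧ e.card = 3 ∧ e ⊆ Q) ⊆ Q.powerset := by
      intro e he
      exact Finset.mem_powerset.mpr (Finset.mem_filter.mp he).2.2.2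
    have := Finset.card_le_card hsub
    rw [Finset.card_powerset, hQ4] at this
    omega
  -- splitting the degree
  have hsplit : dDeg E u ≤ degI E 2 u +
      (E.filter (fun e => u ∈ e ∧ e.card = 3 ∧ e ⊆ Q)).card + S.card := by
    have hsub : E.filter (fun e => u ∈ e ∧ 2 ≤ e.card) ⊆
        (E.filter (fun e => u ∈ e ∧ e.card = 2) ∪
          E.filter (fun e => u ∈ e ∧ e.card = 3 ∧ e ⊆ Q)) ∪ S := by
      intro e he
      rw [Finset.mem_filter] at he
      obtain ⟨heE, hue, hc⟩ := he
      have := h3 e heE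
      simp only [Finset.mem_union, Finset.mem_filter, hS]
      by_cases h2c : e.card = 2
      · exact Or.inl (Or.inl ⟨heE, hue, h2c⟩)
      · have h3c : e.card = 3 := by omega
        by_cases hsq : e ⊆ Q
        · exact Or.inl (Or.inr ⟨heE, hue, h3c, hsq⟩)
        · exact Or.inr ⟨heE, hue, h3c, hsq⟩
    have t0 := Finset.card_le_card hsub
    have t1 := Finset.card_union_le (E.filter (fun e => u ∈ e ∧ e.card = 2) ∪
      E.filter (fun e => u ∈ e ∧ e.card = 3 ∧ e ⊆ Q)) S
    have t2 := Finset.card_union_le (E.filter (fun e => u ∈ e ∧ e.card = 2))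
      (E.filter (fun e => u ∈ e ∧ e.card = 3 ∧ e ⊆ Q))
    rw [dDeg, degI]
    omega
  -- bound on 2-edges
  have hd2 : degI E 2 u + 1 + ∑ q ∈ Q.erase u, (Mset E Q q).card ≤ n := by
    have hn : 0 < n := u.pos
    haveI : NeZero n := ⟨hn.ne'⟩
    set bU := (Q.erase u).biUnion (fun q => Mset E Q q) with hbU
    set T := Finset.univ \ insert u bU with hT
    set f := fun e : Finset (Fin n) => ∑ z ∈ e.erase u, z with hf
    have hkey : ∀ e ∈ E.filter (fun e => u ∈ e ∧ e.card = 2),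
        f e ∈ e.erase u ∧ e = insert u {f e} := by
      intro e he
      rw [Finset.mem_filter] at he
      obtain ⟨heE, hue, hc⟩ := he
      have h1 : (e.erase u).card = 1 := by rw [Finset.card_erase_of_mem hue, hc]
      obtain ⟨z, hz⟩ := Finset.card_eq_one.mp h1
      have hfz : f e = z := by rw [hf]; simp [hz]
      constructor
      · rw [hfz, hz]; simp
      · rw [hfz, ← hz]
        exact (Finset.insert_erase hue).symm
    have hmaps : ∀ e ∈ E.filter (fun e => u ∈ e ∧ e.card = 2), f e ∈ T := by
      intro e he
      obtain ⟨hfe, heq⟩ := hkey e he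
      rw [Finset.mem_erase] at hfe
      rw [hT, Finset.mem_sdiff]
      refine ⟨Finset.mem_univ _, ?_⟩
      rw [Finset.mem_insert]
      push_neg
      refine ⟨hfe.1, ?_⟩
      rw [hbU, Finset.mem_biUnion]
      push_neg
      intro q hq hmem
      rw [mem_Mset] at hmem
      have hqQ := (Finset.mem_erase.mp hq).2
      have hqu := (Finset.mem_erase.mp hq).1
      have huE : ({u, f e} : Finset (Fin n)) ∈ E := by
        rw [← heq]; exact (Finset.mem_filter.mp he).1
      exact hmem.2.2 u hu (Ne.symm hqu) huE
    have hinj : Set.InjOn f (E.filter (fun e => u ∈ e ∧ e.card = 2)) := by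
      intro e1 h1 e2 h2 hfeq
      have k1 := (hkey e1 h1).2
      have k2 := (hkey e2 h2).2
      rw [k1, k2, hfeq]
    have hcard1 : degI E 2 u ≤ T.card := by
      rw [degI]
      exact Finset.card_le_card_of_injOn f hmaps hinj
    have hTcard : T.card = n - (insert u bU).card := by
      rw [hT, Finset.card_sdiff_of_subset (Finset.subset_univ _), Finset.card_univ, Fintype.card_fin]
    have hunotbU : u ∉ bU := by
      rw [hbU, Finset.mem_biUnion]
      push_neg
      intro q hq hmem
      rw [mem_Mset] at hmem
      exact hmem.1 hu
    have hbUcard : bU.card = ∑ q ∈ Q.erase u, (Mset E Q q).card := by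
      rw [hbU]
      refine Finset.card_biUnion ?_
      intro q hq q' hq' hqq'
      rw [Function.onFun, Finset.disjoint_left]
      intro z hz hz'
      rw [mem_Mset] at hz hz'
      exact hz'.2.2 q (Finset.mem_of_mem_erase hq) hqq' hz.2.1
    have hins : (insert u bU).card = bU.card + 1 := Finset.card_insert_of_notMem hunotbU
    have hle : (insert u bU).card ≤ n := by
      have := Finset.card_le_univ (insert u bU)
      rwa [Fintype.card_fin] at this
    omega
  have hfinal : dDeg E u + 1 + ∑ q ∈ Q.erase u, (Mset E Q q).card ≤
      n + 16 + 2 * (Mset E Q u).card := by omega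
  exact hfinal

end
section
variable {n : ℕ} {E : Finset (Finset (Fin n))} {v w x y : Fin n}

lemma triEq (a b c a' b' c' : Fin n) (h : ∀ t : Fin n, (t = a ∨ t = b ∨ t = c) ↔ (t = a' ∨ t = b' ∨ t = c')) :
    ({a, b, c} : Finset (Fin n)) = {a', b', c'} := by
  ext t; simp [h t]

lemma stepA_vw (hE : IsComplex E) (hB : ¬ HasCopy B E)
    (dvw : v ≠ w) (dvx : v ≠ x) (dvy : v ≠ y) (dwx : w ≠ x) (dwy : w ≠ y) (dxy : x ≠ y)
    (hvwx : ({v, w, x} : Finset (Fin n)) ∈ E) (hvxy : ({v, x, y} : Finset (Fin n)) ∈ E)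
    (hvwy : ({v, w, y} : Finset (Fin n)) ∈ E)
    {z : Fin n} (dzv : z ≠ v) (dzw : z ≠ w) (dzx : z ≠ x) (dzy : z ≠ y) :
    ({v, w, z} : Finset (Fin n)) ∉ E := by
  intro hmem
  refine hB (bcopy hE (a := v) (b := y) (c := x) (d := w) (e := z)
    dvy dvx dvw (Ne.symm dzv) (Ne.symm dxy) (Ne.symm dwy) (Ne.symm dzy)
    (Ne.symm dwx) (Ne.symm dzx) (Ne.symm dzw) ?_ hmem ?_)
  · rw [triEq v y x v x y (by tauto)]; exact hvxy
  · exact hE _ hvwx _ (by intro t ht; simp at ht ⊢; tauto)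

lemma stepA_wx (hE : IsComplex E) (hB : ¬ HasCopy B E)
    (dvw : v ≠ w) (dvx : v ≠ x) (dvy : v ≠ y) (dwx : w ≠ x) (dwy : w ≠ y) (dxy : x ≠ y)
    (hvwx : ({v, w, x} : Finset (Fin n)) ∈ E) (hvxy : ({v, x, y} : Finset (Fin n)) ∈ E)
    (hvwy : ({v, w, y} : Finset (Fin n)) ∈ E)
    {z : Fin n} (dzv : z ≠ v) (dzw : z ≠ w) (dzx : z ≠ x) (dzy : z ≠ y) :
    ({w, x, z} : Finset (Fin n)) ∉ E := by
  intro hmem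
  refine hB (bcopy hE (a := w) (b := y) (c := v) (d := x) (e := z)
    dwy (Ne.symm dvw) dwx (Ne.symm dzw) (Ne.symm dvy) (Ne.symm dxy) (Ne.symm dzy)
    dvx (Ne.symm dzv) (Ne.symm dzx) ?_ hmem ?_)
  · rw [triEq w y v v w y (by tauto)]; exact hvwy
  · exact hE _ hvwx _ (by intro t ht; simp at ht ⊢; tauto)

lemma stepB_v (hE : IsComplex E) (hB : ¬ HasCopy B E)
    (dvw : v ≠ w) (dvx : v ≠ x) (dvy : v ≠ y) (dwx : w ≠ x) (dwy : w ≠ y) (dxy : x ≠ y)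
    (hvwx : ({v, w, x} : Finset (Fin n)) ∈ E)
    {z1 z2 : Fin n} (h1v : z1 ≠ v) (h1w : z1 ≠ w) (h1x : z1 ≠ x)
    (h2v : z2 ≠ v) (h2w : z2 ≠ w) (h2x : z2 ≠ x) (h12 : z1 ≠ z2)
    (hzz : ({v, z1, z2} : Finset (Fin n)) ∈ E) (hp : ({w, z1} : Finset (Fin n)) ∈ E) :
    False := by
  refine hB (bcopy hE (a := v) (b := z2) (c := z1) (d := w) (e := x)
    (Ne.symm h2v) (Ne.symm h1v) dvw dvx (Ne.symm h12) h2w h2x h1w h1x dwx ?_ hvwx ?_)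
  · rw [triEq v z2 z1 v z1 z2 (by tauto)]; exact hzz
  · rw [show ({z1, w} : Finset (Fin n)) = {w, z1} from by ext t; simp; tauto]; exact hp

lemma stepB_wv (hE : IsComplex E) (hB : ¬ HasCopy B E)
    (dvw : v ≠ w) (dvx : v ≠ x) (dvy : v ≠ y) (dwx : w ≠ x) (dwy : w ≠ y) (dxy : x ≠ y)
    (hvwx : ({v, w, x} : Finset (Fin n)) ∈ E)
    {z1 z2 : Fin n} (h1v : z1 ≠ v) (h1w : z1 ≠ w) (h1x : z1 ≠ x)
    (h2v : z2 ≠ v) (h2w : z2 ≠ w) (h2x : z2 ≠ x) (h12 : z1 ≠ z2)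
    (hzz : ({w, z1, z2} : Finset (Fin n)) ∈ E) (hp : ({v, z1} : Finset (Fin n)) ∈ E) :
    False := by
  refine hB (bcopy hE (a := w) (b := z2) (c := z1) (d := v) (e := x)
    (Ne.symm h2w) (Ne.symm h1w) (Ne.symm dvw) dwx (Ne.symm h12) h2v h2x h1v h1x dvx ?_ ?_ ?_)
  · rw [triEq w z2 z1 w z1 z2 (by tauto)]; exact hzz
  · rw [triEq w v x v w x (by tauto)]; exact hvwx
  · rw [show ({z1, v} : Finset (Fin n)) = {v, z1} from by ext t; simp; tauto]; exact hp

lemma stepB_wx (hE : IsComplex E) (hB : ¬ HasCopy B E)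
    (dvw : v ≠ w) (dvx : v ≠ x) (dvy : v ≠ y) (dwx : w ≠ x) (dwy : w ≠ y) (dxy : x ≠ y)
    (hvwx : ({v, w, x} : Finset (Fin n)) ∈ E)
    {z1 z2 : Fin n} (h1v : z1 ≠ v) (h1w : z1 ≠ w) (h1x : z1 ≠ x)
    (h2v : z2 ≠ v) (h2w : z2 ≠ w) (h2x : z2 ≠ x) (h12 : z1 ≠ z2)
    (hzz : ({w, z1, z2} : Finset (Fin n)) ∈ E) (hp : ({x, z1} : Finset (Fin n)) ∈ E) :
    False := by
  refine hB (bcopy hE (a := w) (b := z2) (c := z1) (d := x) (e := v)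
    (Ne.symm h2w) (Ne.symm h1w) dwx (Ne.symm dvw) (Ne.symm h12) h2x h2v h1x h1v (Ne.symm dvx) ?_ ?_ ?_)
  · rw [triEq w z2 z1 w z1 z2 (by tauto)]; exact hzz
  · rw [triEq w x v v w x (by tauto)]; exact hvwx
  · rw [show ({z1, x} : Finset (Fin n)) = {x, z1} from by ext t; simp; tauto]; exact hp

end
section
variable {n : ℕ} {E : Finset (Finset (Fin n))}

lemma stepCgen (hE : IsComplex E) (hB : ¬ HasCopy B E) (u : Fin n) :
    ∀ z1 t1 z2 t2 : Fin n, z1 ≠ u → t1 ≠ u → z2 ≠ u → t2 ≠ u →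
      z1 ≠ t1 → z1 ≠ z2 → z1 ≠ t2 → t1 ≠ z2 → t1 ≠ t2 → z2 ≠ t2 →
      (insert u ({z1, t1} : Finset (Fin n))) ∈ E →
      (insert u ({z2, t2} : Finset (Fin n))) ∈ E →
      ({z1, z2} : Finset (Fin n)) ∈ E → False := by
  intro z1 t1 z2 t2 h1u h2u h3u h4u h12 h13 h14 h23 h24 h34 he1 he2 he3
  refine hB (bcopy hE (a := u) (b := t1) (c := z1) (d := z2) (e := t2)
    (Ne.symm h2u) (Ne.symm h1u) (Ne.symm h3u) (Ne.symm h4u)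
    (Ne.symm h12) h23 h24 h13 h14 h34 ?_ he2 he3)
  rw [triEq u t1 z1 u z1 t1 (by tauto)]; exact he1

lemma link_extract {v a b : Fin n} (hl : ({a, b} : Finset (Fin n)) ∈ linkEdges E v) :
    ({v, a, b} : Finset (Fin n)) ∈ E ∧ v ≠ a ∧ v ≠ b := by
  rw [linkEdges, Finset.mem_image] at hl
  obtain ⟨e, he, heq⟩ := hl
  rw [Finset.mem_filter] at he
  have hv : v ∉ ({a, b} : Finset (Fin n)) := heq ▸ Finset.notMem_erase v e
  simp only [Finset.mem_insert, Finset.mem_singleton, not_or] at hv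
  have heeq : e = insert v ({a, b} : Finset (Fin n)) := by
    rw [← heq, Finset.insert_erase he.2]
  exact ⟨heeq ▸ he.1, hv.1, hv.2⟩

end

set_option maxHeartbeats 2000000 in
theorem statement17 : ∃ n0 : ℕ, ∀ n : ℕ, n0 ≤ n → ∀ E : Finset (Finset (Fin n)),
    IsComplex E → ¬ HasCopy B E →
    (∀ e ∈ E, e.card ≤ 3) →
    (∀ u : Fin n, (dDeg E u : ℝ) > 9 / 8 * ((n : ℝ) - 1) + 5 / 16) →
    ∀ v : Fin n, ¬ ∃ w x y : Fin n, w ≠ x ∧ x ≠ y ∧ w ≠ y ∧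
      ({w, x} : Finset (Fin n)) ∈ linkEdges E v ∧
      ({x, y} : Finset (Fin n)) ∈ linkEdges E v ∧
      ({w, y} : Finset (Fin n)) ∈ linkEdges E v := by
  refine ⟨400, ?_⟩
  intro n hn E hE hB h3 hdeg v hcon
  obtain ⟨w, x, y, dwx, dxy, dwy, hl1, hl2, hl3⟩ := hcon
  obtain ⟨hvwx, dvw, dvx⟩ := link_extract hl1
  obtain ⟨hvxy, -, dvy⟩ := link_extract hl2
  obtain ⟨hvwy, -, -⟩ := link_extract hl3
  -- permuted triples
  have tvxw : ({v, x, w} : Finset (Fin n)) ∈ E := by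
    rw [triEq v x w v w x (by tauto)]; exact hvwx
  have tvyw : ({v, y, w} : Finset (Fin n)) ∈ E := by
    rw [triEq v y w v w y (by tauto)]; exact hvwy
  have tvyx : ({v, y, x} : Finset (Fin n)) ∈ E := by
    rw [triEq v y x v x y (by tauto)]; exact hvxy
  have hvQ : v ∈ ({v, w, x, y} : Finset (Fin n)) := by simp [Finset.mem_insert, Finset.mem_singleton]
  have hwQ : w ∈ ({v, w, x, y} : Finset (Fin n)) := by simp [Finset.mem_insert, Finset.mem_singleton]
  have hxQ : x ∈ ({v, w, x, y} : Finset (Fin n)) := by simp [Finset.mem_insert, Finset.mem_singleton]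
  have hyQ : y ∈ ({v, w, x, y} : Finset (Fin n)) := by simp [Finset.mem_insert, Finset.mem_singleton]
  have hQ4 : ({v, w, x, y} : Finset (Fin n)).card = 4 := by
    rw [Finset.card_insert_of_notMem (by simp [dvw, dvx, dvy]),
      card3' dwx dwy dxy]
  -- step A lemmas
  have hA_v : ∀ q ∈ ({v, w, x, y} : Finset (Fin n)), q ≠ v → ∀ z ∉ ({v, w, x, y} : Finset (Fin n)), insert v ({q, z} : Finset (Fin n)) ∉ E := by
    intro q hq hqv z hz
    simp only [Finset.mem_insert, Finset.mem_singleton] at hq hz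
    push_neg at hz
    obtain ⟨hzv, hzw, hzx, hzy⟩ := hz
    rcases hq with rfl | rfl | rfl | rfl
    · exact absurd rfl hqv
    · exact stepA_vw hE hB dvw dvx dvy dwx dwy dxy hvwx hvxy hvwy hzv hzw hzx hzy
    · exact stepA_vw hE hB dvx dvy dvw dxy (Ne.symm dwx) (Ne.symm dwy)
        hvxy tvyw tvxw hzv hzx hzy hzw
    · exact stepA_vw hE hB dvy dvw dvx (Ne.symm dwy) (Ne.symm dxy) dwx
        tvyw hvwx tvyx hzv hzy hzw hzx
  have hA_w : ∀ q ∈ ({v, w, x, y} : Finset (Fin n)), q ≠ w → ∀ z ∉ ({v, w, x, y} : Finset (Fin n)), insert w ({q, z} : Finset (Fin n)) ∉ E := by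
    intro q hq hqw z hz
    simp only [Finset.mem_insert, Finset.mem_singleton] at hq hz
    push_neg at hz
    obtain ⟨hzv, hzw, hzx, hzy⟩ := hz
    rcases hq with rfl | rfl | rfl | rfl
    · rw [triEq w q z q w z (by tauto)]
      exact stepA_vw hE hB dvw dvx dvy dwx dwy dxy hvwx hvxy hvwy hzv hzw hzx hzy
    · exact absurd rfl hqw
    · exact stepA_wx hE hB dvw dvx dvy dwx dwy dxy hvwx hvxy hvwy hzv hzw hzx hzy
    · exact stepA_wx hE hB dvw dvy dvx dwy dwx (Ne.symm dxy)
        hvwy tvyx hvwx hzv hzw hzy hzx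
  have hA_x : ∀ q ∈ ({v, w, x, y} : Finset (Fin n)), q ≠ x → ∀ z ∉ ({v, w, x, y} : Finset (Fin n)), insert x ({q, z} : Finset (Fin n)) ∉ E := by
    intro q hq hqx z hz
    simp only [Finset.mem_insert, Finset.mem_singleton] at hq hz
    push_neg at hz
    obtain ⟨hzv, hzw, hzx, hzy⟩ := hz
    rcases hq with rfl | rfl | rfl | rfl
    · rw [triEq x q z q x z (by tauto)]
      exact stepA_vw hE hB dvx dvy dvw dxy (Ne.symm dwx) (Ne.symm dwy)
        hvxy tvyw tvxw hzv hzx hzy hzw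
    · rw [triEq x q z q x z (by tauto)]
      exact stepA_wx hE hB dvw dvx dvy dwx dwy dxy hvwx hvxy hvwy hzv hzw hzx hzy
    · exact absurd rfl hqx
    · exact stepA_wx hE hB dvx dvy dvw dxy (Ne.symm dwx) (Ne.symm dwy)
        hvxy tvyw tvxw hzv hzx hzy hzw
  have hA_y : ∀ q ∈ ({v, w, x, y} : Finset (Fin n)), q ≠ y → ∀ z ∉ ({v, w, x, y} : Finset (Fin n)), insert y ({q, z} : Finset (Fin n)) ∉ E := by
    intro q hq hqy z hz
    simp only [Finset.mem_insert, Finset.mem_singleton] at hq hz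
    push_neg at hz
    obtain ⟨hzv, hzw, hzx, hzy⟩ := hz
    rcases hq with rfl | rfl | rfl | rfl
    · rw [triEq y q z q y z (by tauto)]
      exact stepA_vw hE hB dvy dvw dvx (Ne.symm dwy) (Ne.symm dxy) dwx
        tvyw hvwx tvyx hzv hzy hzw hzx
    · rw [triEq y q z q y z (by tauto)]
      exact stepA_wx hE hB dvw dvy dvx dwy dwx (Ne.symm dxy)
        hvwy tvyx hvwx hzv hzw hzy hzx
    · rw [triEq y q z q y z (by tauto)]
      exact stepA_wx hE hB dvx dvy dvw dxy (Ne.symm dwx) (Ne.symm dwy)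
        hvxy tvyw tvxw hzv hzx hzy hzw
    · exact absurd rfl hqy
  -- step B lemmas
  have hB_v : ∀ z1 z2 : Fin n, z1 ∉ ({v, w, x, y} : Finset (Fin n)) → z2 ∉ ({v, w, x, y} : Finset (Fin n)) → z1 ≠ z2 →
      (insert v ({z1, z2} : Finset (Fin n))) ∈ E → ∀ p ∈ ({v, w, x, y} : Finset (Fin n)), p ≠ v →
      ({p, z1} : Finset (Fin n)) ∉ E := by
    intro z1 z2 hz1 hz2 h12 hzz p hp hpv hmem
    simp only [Finset.mem_insert, Finset.mem_singleton] at hp hz1 hz2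
    push_neg at hz1 hz2
    obtain ⟨h1v, h1w, h1x, h1y⟩ := hz1
    obtain ⟨h2v, h2w, h2x, h2y⟩ := hz2
    rcases hp with rfl | rfl | rfl | rfl
    · exact absurd rfl hpv
    · exact stepB_v hE hB dvw dvx dvy dwx dwy dxy hvwx
        h1v h1w h1x h2v h2w h2x h12 hzz hmem
    · exact stepB_v hE hB dvx dvy dvw dxy (Ne.symm dwx) (Ne.symm dwy) hvxy
        h1v h1x h1y h2v h2x h2y h12 hzz hmem
    · exact stepB_v hE hB dvy dvw dvx (Ne.symm dwy) (Ne.symm dxy) dwx tvyw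
        h1v h1y h1w h2v h2y h2w h12 hzz hmem
  have hB_w : ∀ z1 z2 : Fin n, z1 ∉ ({v, w, x, y} : Finset (Fin n)) → z2 ∉ ({v, w, x, y} : Finset (Fin n)) → z1 ≠ z2 →
      (insert w ({z1, z2} : Finset (Fin n))) ∈ E → ∀ p ∈ ({v, w, x, y} : Finset (Fin n)), p ≠ w →
      ({p, z1} : Finset (Fin n)) ∉ E := by
    intro z1 z2 hz1 hz2 h12 hzz p hp hpw hmem
    simp only [Finset.mem_insert, Finset.mem_singleton] at hp hz1 hz2
    push_neg at hz1 hz2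
    obtain ⟨h1v, h1w, h1x, h1y⟩ := hz1
    obtain ⟨h2v, h2w, h2x, h2y⟩ := hz2
    rcases hp with rfl | rfl | rfl | rfl
    · exact stepB_wv hE hB dvw dvx dvy dwx dwy dxy hvwx
        h1v h1w h1x h2v h2w h2x h12 hzz hmem
    · exact absurd rfl hpw
    · exact stepB_wx hE hB dvw dvx dvy dwx dwy dxy hvwx
        h1v h1w h1x h2v h2w h2x h12 hzz hmem
    · exact stepB_wx hE hB dvw dvy dvx dwy dwx (Ne.symm dxy) hvwy
        h1v h1w h1y h2v h2w h2y h12 hzz hmem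
  have hB_x : ∀ z1 z2 : Fin n, z1 ∉ ({v, w, x, y} : Finset (Fin n)) → z2 ∉ ({v, w, x, y} : Finset (Fin n)) → z1 ≠ z2 →
      (insert x ({z1, z2} : Finset (Fin n))) ∈ E → ∀ p ∈ ({v, w, x, y} : Finset (Fin n)), p ≠ x →
      ({p, z1} : Finset (Fin n)) ∉ E := by
    intro z1 z2 hz1 hz2 h12 hzz p hp hpx hmem
    simp only [Finset.mem_insert, Finset.mem_singleton] at hp hz1 hz2
    push_neg at hz1 hz2
    obtain ⟨h1v, h1w, h1x, h1y⟩ := hz1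
    obtain ⟨h2v, h2w, h2x, h2y⟩ := hz2
    rcases hp with rfl | rfl | rfl | rfl
    · exact stepB_wv hE hB dvx dvy dvw dxy (Ne.symm dwx) (Ne.symm dwy) hvxy
        h1v h1x h1y h2v h2x h2y h12 hzz hmem
    · exact stepB_wx hE hB dvx dvw dvy (Ne.symm dwx) dxy dwy tvxw
        h1v h1x h1w h2v h2x h2w h12 hzz hmem
    · exact absurd rfl hpx
    · exact stepB_wx hE hB dvx dvy dvw dxy (Ne.symm dwx) (Ne.symm dwy) hvxy
        h1v h1x h1y h2v h2x h2y h12 hzz hmem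
  have hB_y : ∀ z1 z2 : Fin n, z1 ∉ ({v, w, x, y} : Finset (Fin n)) → z2 ∉ ({v, w, x, y} : Finset (Fin n)) → z1 ≠ z2 →
      (insert y ({z1, z2} : Finset (Fin n))) ∈ E → ∀ p ∈ ({v, w, x, y} : Finset (Fin n)), p ≠ y →
      ({p, z1} : Finset (Fin n)) ∉ E := by
    intro z1 z2 hz1 hz2 h12 hzz p hp hpy hmem
    simp only [Finset.mem_insert, Finset.mem_singleton] at hp hz1 hz2
    push_neg at hz1 hz2
    obtain ⟨h1v, h1w, h1x, h1y⟩ := hz1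
    obtain ⟨h2v, h2w, h2x, h2y⟩ := hz2
    rcases hp with rfl | rfl | rfl | rfl
    · exact stepB_wv hE hB dvy dvw dvx (Ne.symm dwy) (Ne.symm dxy) dwx tvyw
        h1v h1y h1w h2v h2y h2w h12 hzz hmem
    · exact stepB_wx hE hB dvy dvw dvx (Ne.symm dwy) (Ne.symm dxy) dwx tvyw
        h1v h1y h1w h2v h2y h2w h12 hzz hmem
    · exact stepB_wx hE hB dvy dvx dvw (Ne.symm dxy) (Ne.symm dwy) (Ne.symm dwx) tvyx
        h1v h1y h1x h2v h2y h2x h12 hzz hmem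
    · exact absurd rfl hpy
  -- apply the counting lemma
  have key_v := keycount hE h3 hvQ hQ4 hA_v hB_v (stepCgen hE hB v)
  have key_w := keycount hE h3 hwQ hQ4 hA_w hB_w (stepCgen hE hB w)
  have key_x := keycount hE h3 hxQ hQ4 hA_x hB_x (stepCgen hE hB x)
  have key_y := keycount hE h3 hyQ hQ4 hA_y hB_y (stepCgen hE hB y)
  -- compute the erased sets
  have hev : ({v, w, x, y} : Finset (Fin n)).erase v = {w, x, y} := by
    exact Finset.erase_insert (by simp [dvw, dvx, dvy])
  have hew : ({v, w, x, y} : Finset (Fin n)).erase w = {v, x, y} := by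
    rw [show ({v, w, x, y} : Finset (Fin n)) = {w, v, x, y} from by ext t; simp; tauto]
    exact Finset.erase_insert (by simp [Ne.symm dvw, dwx, dwy])
  have hex : ({v, w, x, y} : Finset (Fin n)).erase x = {v, w, y} := by
    rw [show ({v, w, x, y} : Finset (Fin n)) = {x, v, w, y} from by ext t; simp; tauto]
    exact Finset.erase_insert (by simp [Ne.symm dvx, Ne.symm dwx, dxy])
  have hey : ({v, w, x, y} : Finset (Fin n)).erase y = {v, w, x} := by
    rw [show ({v, w, x, y} : Finset (Fin n)) = {y, v, w, x} from by ext t; simp; tauto]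
    exact Finset.erase_insert (by simp [Ne.symm dvy, Ne.symm dwy, Ne.symm dxy])
  have hsum : ∀ a b c : Fin n, a ≠ b → a ≠ c → b ≠ c →
      ∑ q ∈ ({a, b, c} : Finset (Fin n)), (Mset E ({v, w, x, y} : Finset (Fin n)) q).card =
        (Mset E ({v, w, x, y} : Finset (Fin n)) a).card + (Mset E ({v, w, x, y} : Finset (Fin n)) b).card + (Mset E ({v, w, x, y} : Finset (Fin n)) c).card := by
    intro a b c hab hac hbc
    rw [Finset.sum_insert (by simp [hab, hac]), Finset.sum_insert (by simp [hbc]),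
      Finset.sum_singleton, add_assoc]
  rw [hev, hsum w x y dwx dwy dxy] at key_v
  rw [hew, hsum v x y dvx dvy dxy] at key_w
  rw [hex, hsum v w y dvw dvy dwy] at key_x
  rw [hey, hsum v w x dvw dvx dwx] at key_y
  -- final arithmetic
  have hdv := hdeg v
  have hdw := hdeg w
  have hdx := hdeg x
  have hdy := hdeg y
  have hn' : (400 : ℝ) ≤ (n : ℝ) := by exact_mod_cast hn
  have kv : (dDeg E v : ℝ) + 1 + ((Mset E ({v, w, x, y} : Finset (Fin n)) w).card + (Mset E ({v, w, x, y} : Finset (Fin n)) x).card + (Mset E ({v, w, x, y} : Finset (Fin n)) y).card)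
      ≤ (n : ℝ) + 16 + 2 * (Mset E ({v, w, x, y} : Finset (Fin n)) v).card := by exact_mod_cast key_v
  have kw : (dDeg E w : ℝ) + 1 + ((Mset E ({v, w, x, y} : Finset (Fin n)) v).card + (Mset E ({v, w, x, y} : Finset (Fin n)) x).card + (Mset E ({v, w, x, y} : Finset (Fin n)) y).card)
      ≤ (n : ℝ) + 16 + 2 * (Mset E ({v, w, x, y} : Finset (Fin n)) w).card := by exact_mod_cast key_w
  have kx : (dDeg E x : ℝ) + 1 + ((Mset E ({v, w, x, y} : Finset (Fin n)) v).card + (Mset E ({v, w, x, y} : Finset (Fin n)) w).card + (Mset E ({v, w, x, y} : Finset (Fin n)) y).card)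
      ≤ (n : ℝ) + 16 + 2 * (Mset E ({v, w, x, y} : Finset (Fin n)) x).card := by exact_mod_cast key_x
  have ky : (dDeg E y : ℝ) + 1 + ((Mset E ({v, w, x, y} : Finset (Fin n)) v).card + (Mset E ({v, w, x, y} : Finset (Fin n)) w).card + (Mset E ({v, w, x, y} : Finset (Fin n)) x).card)
      ≤ (n : ℝ) + 16 + 2 * (Mset E ({v, w, x, y} : Finset (Fin n)) y).card := by exact_mod_cast key_y
  have pv : (0 : ℝ) ≤ (Mset E ({v, w, x, y} : Finset (Fin n)) v).card := Nat.cast_nonneg _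
  have pw : (0 : ℝ) ≤ (Mset E ({v, w, x, y} : Finset (Fin n)) w).card := Nat.cast_nonneg _
  have px : (0 : ℝ) ≤ (Mset E ({v, w, x, y} : Finset (Fin n)) x).card := Nat.cast_nonneg _
  have py : (0 : ℝ) ≤ (Mset E ({v, w, x, y} : Finset (Fin n)) y).card := Nat.cast_nonneg _
  linarith
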